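/- Let p₁ = [0:1], p₂ = [1:1], p₃ = [2:1], p₄ = [3:1], p₅ = [6:1] in ℙ¹(ℚ), and let Γ_P be the subgroup of PGL₂(ℚ) generated by all elements g such that for some pairwise distinct indices i, j, k, l ∈ {1,…,5} one has g(p_i) = p_j, g(p_j) = p_i, g(p_k) = p_l, and g(p_l) = p_k. Then Γ_P contains both σ (the class of the matrix with rows (1,1),(0,1), acting as z ↦ z+1) and τ (the class of the matrix with rows (3,0),(0,1), acting as z ↦ 3z). -/

import Mathlib

open Matrix

noncomputable section

/-- The projective line `ℙ¹(K)` over a field `K`, as the projectivization of `K²`. -/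
abbrev P1 (K : Type*) [Field K] : Type _ := Projectivization K (Fin 2 → K)

/-- `PGL₂(K)`: the quotient of `GL₂(K)` by its center. -/
abbrev PGL2 (K : Type*) [Field K] : Type _ :=
  GL (Fin 2) K ⧸ Subgroup.center (GL (Fin 2) K)

namespace PGL2

variable {K : Type*} [Field K]

/-- The linear automorphism of `K²` attached to an element of `GL₂(K)`. -/
def glEquiv (g : GL (Fin 2) K) : (Fin 2 → K) ≃ₗ[K] (Fin 2 → K) :=
  (Matrix.GeneralLinearGroup.toLin g).toLinearEquiv

lemma glEquiv_apply (g : GL (Fin 2) K) (v : Fin 2 → K) :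
    glEquiv g v = (g : Matrix (Fin 2) (Fin 2) K).mulVec v := rfl

/-- `GL₂(K)` acts on `ℙ¹(K)` by Möbius transformations. -/
instance : SMul (GL (Fin 2) K) (P1 K) :=
  ⟨fun g => Projectivization.map (glEquiv g).toLinearMap (glEquiv g).injective⟩

lemma gl_smul_mk (g : GL (Fin 2) K) (v : Fin 2 → K) (hv : v ≠ 0) :
    g • Projectivization.mk K v hv
      = Projectivization.mk K ((g : Matrix (Fin 2) (Fin 2) K).mulVec v)
          (fun h => hv ((glEquiv g).injective (by rw [glEquiv_apply, h, map_zero]))) :=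
  Projectivization.map_mk (glEquiv g).toLinearMap (glEquiv g).injective v hv

instance : MulAction (GL (Fin 2) K) (P1 K) where
  one_smul x := by
    induction x using Projectivization.ind with
    | h v hv => rw [gl_smul_mk]; simp
  mul_smul g h x := by
    induction x using Projectivization.ind with
    | h v hv => rw [gl_smul_mk, gl_smul_mk, gl_smul_mk]; simp only [Units.val_mul, Matrix.mulVec_mulVec]

lemma exists_scalar_of_mem_center (g : GL (Fin 2) K)
    (hg : g ∈ Subgroup.center (GL (Fin 2) K)) :
    ∃ a : K, (g : Matrix (Fin 2) (Fin 2) K) = a • (1 : Matrix (Fin 2) (Fin 2) K) := by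
  have hmem := Subgroup.mem_center_iff.mp hg
  set A : Matrix (Fin 2) (Fin 2) K := (g : Matrix (Fin 2) (Fin 2) K) with hA
  have hUdet : ((!![1, 1; 0, 1] : Matrix (Fin 2) (Fin 2) K)).det ≠ 0 := by
    norm_num [Matrix.det_fin_two_of]
  have hLdet : ((!![1, 0; 1, 1] : Matrix (Fin 2) (Fin 2) K)).det ≠ 0 := by
    norm_num [Matrix.det_fin_two_of]
  have hU := congrArg Units.val (hmem (Matrix.GeneralLinearGroup.mkOfDetNeZero _ hUdet))
  have hL := congrArg Units.val (hmem (Matrix.GeneralLinearGroup.mkOfDetNeZero _ hLdet))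
  have hU' : (!![1, 1; 0, 1] : Matrix (Fin 2) (Fin 2) K) * A = A * !![1, 1; 0, 1] := hU
  have hL' : (!![1, 0; 1, 1] : Matrix (Fin 2) (Fin 2) K) * A = A * !![1, 0; 1, 1] := hL
  have e1 := congrFun (congrFun hU' 0) 0
  have e2 := congrFun (congrFun hU' 0) 1
  have e3 := congrFun (congrFun hL' 0) 0
  simp [Matrix.mul_apply, Fin.sum_univ_two] at e1 e2 e3
  refine ⟨A 0 0, ?_⟩
  ext i j
  fin_cases i <;> fin_cases j <;>
    simp [Matrix.one_apply] <;> first | exact e3 | exact e1 | linear_combination e2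



lemma center_smul_eq (g : GL (Fin 2) K) (hg : g ∈ Subgroup.center (GL (Fin 2) K))
    (x : P1 K) : g • x = x := by
  obtain ⟨a, hA⟩ := exists_scalar_of_mem_center g hg
  have ha : a ≠ 0 := by
    intro h
    subst h
    have : IsUnit (g : Matrix (Fin 2) (Fin 2) K).det := ⟨Matrix.GeneralLinearGroup.det g, rfl⟩
    rw [hA] at this
    simp at this
  induction x using Projectivization.ind with
  | h v hv =>
    rw [gl_smul_mk]
    rw [Projectivization.mk_eq_mk_iff]
    exact ⟨Units.mk0 a ha, by simp [hA]; ext i; fin_cases i <;> simp⟩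

/-- `PGL₂(K)` acts on `ℙ¹(K)` by Möbius transformations. -/
def toPerm : PGL2 K →* Equiv.Perm (P1 K) :=
  QuotientGroup.lift _ (MulAction.toPermHom (GL (Fin 2) K) (P1 K))
    (fun g hg => Equiv.ext fun x => center_smul_eq g hg x)

instance : SMul (PGL2 K) (P1 K) := ⟨fun g x => toPerm g x⟩

lemma smul_def (g : PGL2 K) (x : P1 K) : g • x = toPerm g x := rfl

instance : MulAction (PGL2 K) (P1 K) where
  one_smul x := by simp [smul_def]
  mul_smul g h x := by simp [smul_def]

/-- The class in `PGL₂(K)` of a matrix with nonzero determinant. -/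
def cls (M : Matrix (Fin 2) (Fin 2) K) (h : M.det ≠ 0) : PGL2 K :=
  QuotientGroup.mk (Matrix.GeneralLinearGroup.mkOfDetNeZero M h)

lemma cls_smul_mk (M : Matrix (Fin 2) (Fin 2) K) (h : M.det ≠ 0) (v : Fin 2 → K)
    (hv : v ≠ 0) (hMv : M.mulVec v ≠ 0) :
    cls M h • Projectivization.mk K v hv = Projectivization.mk K (M.mulVec v) hMv := by
  rw [smul_def, cls]
  show (Matrix.GeneralLinearGroup.mkOfDetNeZero M h) • Projectivization.mk K v hv = _
  rw [gl_smul_mk]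
  rfl

lemma vec_ne_zero (a : K) : ![a, (1 : K)] ≠ 0 := fun h => by simpa using congrFun h 1

/-- The affine point `[z : 1]` of `ℙ¹(K)`. -/
def affPt (z : K) : P1 K := Projectivization.mk K ![z, 1] (vec_ne_zero z)

/-- The point `[a : b]` of `ℙ¹(K)`. -/
def pt (a b : K) (h : ![a, b] ≠ 0) : P1 K := Projectivization.mk K ![a, b] h

end PGL2


open PGL2

/-- The configuration `P = (0, 1, 2, 3, 6)` in `ℙ¹(ℚ)`. -/
noncomputable def pconf : Fin 5 → P1 ℚ :=
  ![affPt 0, affPt 1, affPt 2, affPt 3, affPt 6]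

/-- `Γ_P`: the subgroup of `PGL₂(ℚ)` generated by the involutions exchanging two
disjoint pairs of points of the configuration `P`. -/
noncomputable def GammaP : Subgroup (PGL2 ℚ) :=
  Subgroup.closure {g : PGL2 ℚ | ∃ i j k l : Fin 5,
    i ≠ j ∧ i ≠ k ∧ i ≠ l ∧ j ≠ k ∧ j ≠ l ∧ k ≠ l ∧
    g • pconf i = pconf j ∧ g • pconf j = pconf i ∧
    g • pconf k = pconf l ∧ g • pconf l = pconf k}

namespace PGL2Aux

open PGL2

lemma cls_mul (M N : Matrix (Fin 2) (Fin 2) ℚ) (hM : M.det ≠ 0) (hN : N.det ≠ 0) :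
    cls M hM * cls N hN = cls (M * N) (by simp [Matrix.det_mul, hM, hN]) := by
  unfold cls
  rw [← QuotientGroup.mk_mul]
  congr 1
  exact Units.ext rfl

/-- A nonzero scalar matrix, as a unit in `GL₂(ℚ)`. -/
def scalarUnit (a : ℚ) (ha : a ≠ 0) : GL (Fin 2) ℚ :=
  ⟨a • (1 : Matrix (Fin 2) (Fin 2) ℚ), a⁻¹ • (1 : Matrix (Fin 2) (Fin 2) ℚ),
    by simp [smul_smul, mul_inv_cancel₀ ha, inv_mul_cancel₀ ha],
    by simp [smul_smul, mul_inv_cancel₀ ha, inv_mul_cancel₀ ha]⟩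

lemma scalarUnit_mem_center (a : ℚ) (ha : a ≠ 0) :
    scalarUnit a ha ∈ Subgroup.center (GL (Fin 2) ℚ) := by
  rw [Subgroup.mem_center_iff]
  intro g
  apply Units.ext
  show (g : Matrix (Fin 2) (Fin 2) ℚ) * (a • 1) = (a • 1) * (g : Matrix (Fin 2) (Fin 2) ℚ)
  simp [Matrix.mul_smul, Matrix.smul_mul]

lemma cls_smul (a : ℚ) (ha : a ≠ 0) (M : Matrix (Fin 2) (Fin 2) ℚ) (hM : M.det ≠ 0)
    (h' : (a • M).det ≠ 0) : cls (a • M) h' = cls M hM := by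
  unfold cls
  have key : Matrix.GeneralLinearGroup.mkOfDetNeZero (a • M) h'
      = scalarUnit a ha * Matrix.GeneralLinearGroup.mkOfDetNeZero M hM := by
    apply Units.ext
    show a • M = (a • (1 : Matrix (Fin 2) (Fin 2) ℚ)) * M
    simp [Matrix.smul_mul]
  rw [key, QuotientGroup.mk_mul]
  have : (QuotientGroup.mk (scalarUnit a ha) : PGL2 ℚ) = 1 :=
    (QuotientGroup.eq_one_iff _).mpr (scalarUnit_mem_center a ha)
  rw [this, one_mul]

lemma smul_affPt (M : Matrix (Fin 2) (Fin 2) ℚ) (h : M.det ≠ 0) (z w : ℚ)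
    (hden : M 1 0 * z + M 1 1 ≠ 0)
    (hnum : M 0 0 * z + M 0 1 = w * (M 1 0 * z + M 1 1)) :
    cls M h • affPt z = affPt w := by
  have hv : M.mulVec ![z, 1] ≠ 0 := by
    intro hc
    apply hden
    have h1 := congrFun hc 1
    simpa [Matrix.mulVec, dotProduct, Fin.sum_univ_two] using h1
  rw [affPt, cls_smul_mk M h _ _ hv, affPt, Projectivization.mk_eq_mk_iff]
  refine ⟨Units.mk0 _ hden, ?_⟩
  have hMv : M.mulVec ![z, 1] = ![M 0 0 * z + M 0 1, M 1 0 * z + M 1 1] := by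
    funext i
    fin_cases i <;> simp [Matrix.mulVec, dotProduct, Fin.sum_univ_two]
  rw [hMv, hnum]
  funext i
  fin_cases i <;> simp [Units.smul_def, mul_comm]

lemma cls_congr (M N : Matrix (Fin 2) (Fin 2) ℚ) (hM : M.det ≠ 0) (h : M = N) :
    cls M hM = cls N (h ▸ hM) := by subst h; rfl

lemma pconf0 : pconf 0 = affPt 0 := rfl
lemma pconf1 : pconf 1 = affPt 1 := rfl
lemma pconf2 : pconf 2 = affPt 2 := rfl
lemma pconf3 : pconf 3 = affPt 3 := rfl
lemma pconf4 : pconf 4 = affPt 6 := rfl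

end PGL2Aux

open PGL2Aux

/-- `Γ_P` contains the Möbius transformations `σ : z ↦ z + 1` and `τ : z ↦ 3z`. -/


theorem sigma_tau_mem_GammaP :
    cls !![(1 : ℚ), 1; 0, 1] (by norm_num [Matrix.det_fin_two_of]) ∈ GammaP ∧
      cls !![(3 : ℚ), 0; 0, 1] (by norm_num [Matrix.det_fin_two_of]) ∈ GammaP := by
  have hdet : ∀ a b c d : ℚ, a * d - b * c ≠ 0 → (!![a, b; c, d]).det ≠ 0 := by
    intro a b c d h
    simpa [Matrix.det_fin_two_of] using h
  -- generators for σ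
  have m1 : cls !![(-3 : ℚ), 3; -2, 3] (hdet _ _ _ _ (by norm_num)) ∈ GammaP := by
    apply Subgroup.subset_closure
    refine ⟨0, 1, 2, 3, by decide, by decide, by decide, by decide, by decide, by decide,
      ?_, ?_, ?_, ?_⟩
    · rw [pconf0, pconf1]; exact smul_affPt _ _ 0 1 (by norm_num) (by norm_num)
    · rw [pconf1, pconf0]; exact smul_affPt _ _ 1 0 (by norm_num) (by norm_num)
    · rw [pconf2, pconf3]; exact smul_affPt _ _ 2 3 (by norm_num) (by norm_num)
    · rw [pconf3, pconf2]; exact smul_affPt _ _ 3 2 (by norm_num) (by norm_num)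
  have m2 : cls !![(-18 : ℚ), 36; -7, 18] (hdet _ _ _ _ (by norm_num)) ∈ GammaP := by
    apply Subgroup.subset_closure
    refine ⟨0, 2, 3, 4, by decide, by decide, by decide, by decide, by decide, by decide,
      ?_, ?_, ?_, ?_⟩
    · rw [pconf0, pconf2]; exact smul_affPt _ _ 0 2 (by norm_num) (by norm_num)
    · rw [pconf2, pconf0]; exact smul_affPt _ _ 2 0 (by norm_num) (by norm_num)
    · rw [pconf3, pconf4]; exact smul_affPt _ _ 3 6 (by norm_num) (by norm_num)
    · rw [pconf4, pconf3]; exact smul_affPt _ _ 6 3 (by norm_num) (by norm_num)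
  have m3 : cls !![(-6 : ℚ), 12; -5, 6] (hdet _ _ _ _ (by norm_num)) ∈ GammaP := by
    apply Subgroup.subset_closure
    refine ⟨0, 2, 1, 4, by decide, by decide, by decide, by decide, by decide, by decide,
      ?_, ?_, ?_, ?_⟩
    · rw [pconf0, pconf2]; exact smul_affPt _ _ 0 2 (by norm_num) (by norm_num)
    · rw [pconf2, pconf0]; exact smul_affPt _ _ 2 0 (by norm_num) (by norm_num)
    · rw [pconf1, pconf4]; exact smul_affPt _ _ 1 6 (by norm_num) (by norm_num)
    · rw [pconf4, pconf1]; exact smul_affPt _ _ 6 1 (by norm_num) (by norm_num)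
  -- generators for τ
  have n1 : cls !![(-9 : ℚ), 9; -4, 9] (hdet _ _ _ _ (by norm_num)) ∈ GammaP := by
    apply Subgroup.subset_closure
    refine ⟨0, 1, 3, 4, by decide, by decide, by decide, by decide, by decide, by decide,
      ?_, ?_, ?_, ?_⟩
    · rw [pconf0, pconf1]; exact smul_affPt _ _ 0 1 (by norm_num) (by norm_num)
    · rw [pconf1, pconf0]; exact smul_affPt _ _ 1 0 (by norm_num) (by norm_num)
    · rw [pconf3, pconf4]; exact smul_affPt _ _ 3 6 (by norm_num) (by norm_num)
    · rw [pconf4, pconf3]; exact smul_affPt _ _ 6 3 (by norm_num) (by norm_num)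
  have n2 : cls !![(-9 : ℚ), 24; -4, 9] (hdet _ _ _ _ (by norm_num)) ∈ GammaP := by
    apply Subgroup.subset_closure
    refine ⟨1, 3, 2, 4, by decide, by decide, by decide, by decide, by decide, by decide,
      ?_, ?_, ?_, ?_⟩
    · rw [pconf1, pconf3]; exact smul_affPt _ _ 1 3 (by norm_num) (by norm_num)
    · rw [pconf3, pconf1]; exact smul_affPt _ _ 3 1 (by norm_num) (by norm_num)
    · rw [pconf2, pconf4]; exact smul_affPt _ _ 2 6 (by norm_num) (by norm_num)
    · rw [pconf4, pconf2]; exact smul_affPt _ _ 6 2 (by norm_num) (by norm_num)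
  have n3 : cls !![(-1 : ℚ), 3; 0, 1] (hdet _ _ _ _ (by norm_num)) ∈ GammaP := by
    apply Subgroup.subset_closure
    refine ⟨0, 3, 1, 2, by decide, by decide, by decide, by decide, by decide, by decide,
      ?_, ?_, ?_, ?_⟩
    · rw [pconf0, pconf3]; exact smul_affPt _ _ 0 3 (by norm_num) (by norm_num)
    · rw [pconf3, pconf0]; exact smul_affPt _ _ 3 0 (by norm_num) (by norm_num)
    · rw [pconf1, pconf2]; exact smul_affPt _ _ 1 2 (by norm_num) (by norm_num)
    · rw [pconf2, pconf1]; exact smul_affPt _ _ 2 1 (by norm_num) (by norm_num)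
  constructor
  · have hprod := Subgroup.mul_mem _ (Subgroup.mul_mem _ m1 m2) m3
    rw [cls_mul, cls_mul] at hprod
    have hm : !![(-3 : ℚ), 3; -2, 3] * !![(-18 : ℚ), 36; -7, 18] * !![(-6 : ℚ), 12; -5, 6]
        = (72 : ℚ) • !![(1 : ℚ), 1; 0, 1] := by
      ext i j
      fin_cases i <;> fin_cases j <;>
        norm_num [Matrix.mul_apply, Fin.sum_univ_two, Matrix.smul_apply]
    rw [cls_congr _ _ _ hm,
      cls_smul 72 (by norm_num) _ (by norm_num [Matrix.det_fin_two_of])] at hprod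
    exact hprod
  · have hprod := Subgroup.mul_mem _ (Subgroup.mul_mem _ n1 n2) n3
    rw [cls_mul, cls_mul] at hprod
    have hm : !![(-9 : ℚ), 9; -4, 9] * !![(-9 : ℚ), 24; -4, 9] * !![(-1 : ℚ), 3; 0, 1]
        = (-15 : ℚ) • !![(3 : ℚ), 0; 0, 1] := by
      ext i j
      fin_cases i <;> fin_cases j <;>
        norm_num [Matrix.mul_apply, Fin.sum_univ_two, Matrix.smul_apply]
    rw [cls_congr _ _ _ hm,
      cls_smul (-15) (by norm_num) _ (by norm_num [Matrix.det_fin_two_of])] at hprod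
    exact hprod
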